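/- For m ≥ 1, any knot sequence, and any j with 0 ≤ j ≤ n−1 such that t_j < t_{j+1}, the B-spline function N_{m,j} satisfies, for all u ∈ [t_j, t_{j+1}): N_{m,j}(u) = ( (t_{j+1} − t_j)^{m−1} / ∏_{k=2}^{m} (t_{j+k} − t_j) ) · B^m_m((u − t_j)/(t_{j+1} − t_j)). Equivalently, its adjusted Bernstein–Bézier coefficients over [t_j, t_{j+1}) are b_{m,m}^{(j,j)} = (t_{j+1} − t_j)^{m−1} / ∏_{k=2}^{m} (t_{j+k} − t_j) and b_{m,k}^{(j,j)} = 0 for k = 0, 1, …, m−1. -/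

import Mathlib

/-- The B-spline basis functions `N_{p,i}` of degree `p` over the knot
sequence `t`, defined by the de Boor–Cox recursion, with the conventions that
a fraction with vanishing denominator is replaced by `0` (automatic for real
division in Lean) and that `N_{p,q} ≡ 0` whenever `q < -p` or `q ≥ n`. -/
noncomputable def bspline (t : ℤ → ℝ) (n : ℕ) : ℕ → ℤ → ℝ → ℝ
  | 0 => fun i u =>
      if 0 ≤ i ∧ i < (n : ℤ) ∧ t i ≤ u ∧ u < t (i + 1) then 1 else 0
  | p + 1 => fun i u =>
      if -((p : ℤ) + 1) ≤ i ∧ i < (n : ℤ) then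
        (u - t i) / (t ((p : ℤ) + 1 + i) - t i) * bspline t n p i u
          + (t ((p : ℤ) + 1 + i + 1) - u) / (t ((p : ℤ) + 1 + i + 1) - t (i + 1))
              * bspline t n p (i + 1) u
      else 0

/-- The `k`-th Bernstein basis polynomial of degree `p`. -/
noncomputable def bern (p k : ℕ) (x : ℝ) : ℝ :=
  (p.choose k : ℝ) * x ^ k * (1 - x) ^ (p - k)

/-- A B-spline vanishes to the left of its support. -/
lemma bspline_eq_zero_of_lt (t : ℤ → ℝ) (n m : ℕ) (u : ℝ)
    (hmono : ∀ k l : ℤ, -(m : ℤ) ≤ k → k ≤ l → l ≤ (n : ℤ) + m → t k ≤ t l) :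
    ∀ p : ℕ, ∀ i : ℤ, -(m : ℤ) ≤ i → u < t i → bspline t n p i u = 0 := by
  intro p
  induction p with
  | zero =>
      intro i hi hu
      simp only [bspline, ite_eq_right_iff, and_imp]
      intro _ _ h _
      linarith
  | succ p ih =>
      intro i hi hu
      simp only [bspline]
      split
      · next h =>
          have h1 : bspline t n p i u = 0 := ih i hi hu
          have hti : t i ≤ t (i + 1) := by
            apply hmono i (i + 1) hi (by linarith)
            have := h.2
            have hmnn : (0:ℤ) ≤ (m:ℤ) := Int.ofNat_nonneg m
            linarith
          have h2 : bspline t n p (i + 1) u = 0 :=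
            ih (i + 1) (by linarith) (lt_of_lt_of_le hu hti)
          rw [h1, h2]; ring
      · rfl

/-- Product formula for `N_{p,j}` over the span `[t_j, t_{j+1})`. -/
lemma bspline_span_prod (t : ℤ → ℝ) (n m : ℕ) (u : ℝ)
    (hmono : ∀ k l : ℤ, -(m : ℤ) ≤ k → k ≤ l → l ≤ (n : ℤ) + m → t k ≤ t l)
    (j : ℤ) (hj1 : 0 ≤ j) (hj2 : j ≤ (n : ℤ) - 1)
    (hu1 : t j ≤ u) (hu2 : u < t (j + 1)) :
    ∀ p : ℕ, bspline t n p j u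
      = ∏ k ∈ Finset.Icc 1 p, ((u - t j) / (t (j + (k : ℤ)) - t j)) := by
  intro p
  induction p with
  | zero =>
      simp only [bspline, Finset.Icc_self, Finset.Icc_eq_empty_iff]
      rw [if_pos ⟨hj1, by linarith, hu1, hu2⟩]
      simp
  | succ p ih =>
      simp only [bspline]
      rw [if_pos ⟨by linarith [Int.ofNat_nonneg p], by linarith⟩]
      have hz : bspline t n p (j + 1) u = 0 :=
        bspline_eq_zero_of_lt t n m u hmono p (j + 1) (by linarith) hu2
      rw [hz, ih, mul_zero, add_zero]
      rw [Finset.prod_Icc_succ_top (by omega : 1 ≤ p + 1)]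
      have : ((p : ℤ) + 1 + j) = j + ((p + 1 : ℕ) : ℤ) := by push_cast; ring
      rw [this]
      ring

theorem bspline_last_over_span
    (m n : ℕ) (hm : 1 ≤ m) (hn : 1 ≤ n) (t : ℤ → ℝ)
    (hmono : ∀ k l : ℤ, -(m : ℤ) ≤ k → k ≤ l → l ≤ (n : ℤ) + m → t k ≤ t l)
    (h0n : t 0 < t n)
    (j : ℤ) (hj1 : 0 ≤ j) (hj2 : j ≤ (n : ℤ) - 1) (hspan : t j < t (j + 1))
    (b : ℕ → ℝ)
    (hb : ∀ u ∈ Set.Ico (t j) (t (j + 1)),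
      bspline t n m j u
        = ∑ k ∈ Finset.range (m + 1),
            b k * bern m k ((u - t j) / (t (j + 1) - t j))) :
    (∀ u ∈ Set.Ico (t j) (t (j + 1)),
        bspline t n m j u
          = ((t (j + 1) - t j) ^ (m - 1)
                / ∏ k ∈ Finset.Icc 2 m, (t (j + (k : ℤ)) - t j))
              * bern m m ((u - t j) / (t (j + 1) - t j)))
      ∧ b m = (t (j + 1) - t j) ^ (m - 1)
                / ∏ k ∈ Finset.Icc 2 m, (t (j + (k : ℤ)) - t j)
      ∧ ∀ k : ℕ, k < m → b k = 0 := by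
  set T : ℝ := t (j + 1) - t j with hT
  have hTpos : 0 < T := by simp [hT]; linarith
  -- positivity of the denominators
  have hd : ∀ k : ℕ, 1 ≤ k → k ≤ m → 0 < t (j + (k : ℤ)) - t j := by
    intro k hk1 hk2
    have : t (j + 1) ≤ t (j + (k : ℤ)) := by
      apply hmono (j + 1) (j + (k : ℤ)) (by linarith) (by omega)
      omega
    linarith
  set P2 : ℝ := ∏ k ∈ Finset.Icc 2 m, (t (j + (k : ℤ)) - t j) with hP2
  have hP2pos : 0 < P2 := by
    apply Finset.prod_pos
    intro k hk
    simp only [Finset.mem_Icc] at hk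
    exact hd k (by omega) hk.2
  set c : ℝ := T ^ (m - 1) / P2 with hc
  obtain ⟨m', rfl⟩ : ∃ m', m = m' + 1 := ⟨m - 1, by omega⟩
  -- the closed formula over the span
  have key : ∀ u ∈ Set.Ico (t j) (t (j + 1)),
      bspline t n (m' + 1) j u = c * ((u - t j) / T) ^ (m' + 1) := by
    rintro u ⟨hu1, hu2⟩
    rw [bspline_span_prod t n (m' + 1) u hmono j hj1 hj2 hu1 hu2 (m' + 1)]
    rw [Finset.prod_div_distrib, Finset.prod_const, Nat.card_Icc]
    have hsplit : Finset.Icc 1 (m' + 1) = insert 1 (Finset.Icc 2 (m' + 1)) := by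
      ext x; simp [Finset.mem_Icc, Finset.mem_insert]; omega
    have h1not : (1 : ℕ) ∉ Finset.Icc 2 (m' + 1) := by simp
    rw [hsplit, Finset.prod_insert h1not]
    have hj1t : t (j + ((1:ℕ) : ℤ)) = t (j + 1) := by norm_num
    rw [hj1t, ← hT, ← hP2, hc]
    have hTne : T ≠ 0 := ne_of_gt hTpos
    have hP2ne : P2 ≠ 0 := ne_of_gt hP2pos
    simp only [Nat.add_sub_cancel]
    rw [div_pow]
    field_simp
    ring
  have hbern : ∀ x : ℝ, bern (m' + 1) (m' + 1) x = x ^ (m' + 1) := by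
    intro x; simp [bern]
  refine ⟨?_, ?_⟩
  · intro u hu
    rw [key u hu, hbern]
  -- coefficient identification
  have hxval : ∀ x : ℝ, 0 ≤ x → x < 1 →
      ∑ k ∈ Finset.range (m' + 1 + 1), b k * bern (m' + 1) k x = c * x ^ (m' + 1) := by
    intro x hx0 hx1
    have hu : t j + x * T ∈ Set.Ico (t j) (t (j + 1)) := by
      constructor
      · nlinarith
      · nlinarith
    have hxeq : (t j + x * T - t j) / T = x := by
      field_simp
      ring
    have := (hb _ hu).symm.trans (key _ hu)
    rw [hxeq] at this
    exact this
  -- change of variable y = x/(1-x): polynomial identity in y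
  have hyval : ∀ y : ℝ, 0 ≤ y →
      ∑ k ∈ Finset.range (m' + 1 + 1),
        b k * ((m' + 1).choose k : ℝ) * y ^ k = c * y ^ (m' + 1) := by
    intro y hy
    set s : ℝ := 1 + y with hs
    have hspos : 0 < s := by linarith
    have hsne : s ≠ 0 := ne_of_gt hspos
    have hx0 : 0 ≤ y / s := div_nonneg hy (le_of_lt hspos)
    have hx1 : y / s < 1 := by
      rw [div_lt_one hspos]; linarith
    have H := hxval (y / s) hx0 hx1
    have hmul := congrArg (fun z => z * s ^ (m' + 1)) H
    simp only [Finset.sum_mul] at hmul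
    have hone : 1 - y / s = 1 / s := by field_simp; ring
    have hterm : ∀ k ∈ Finset.range (m' + 1 + 1),
        b k * bern (m' + 1) k (y / s) * s ^ (m' + 1)
          = b k * ((m' + 1).choose k : ℝ) * y ^ k := by
      intro k hk
      simp only [Finset.mem_range] at hk
      have hkle : k ≤ m' + 1 := by omega
      have hsm : s ^ (m' + 1) = s ^ k * s ^ (m' + 1 - k) := by
        rw [← pow_add]; congr 1; omega
      rw [bern, hone, div_pow, div_pow, one_pow, hsm]
      field_simp
    rw [Finset.sum_congr rfl hterm] at hmul
    have hrhs : c * (y / s) ^ (m' + 1) * s ^ (m' + 1) = c * y ^ (m' + 1) := by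
      rw [div_pow]; field_simp
    rw [hrhs] at hmul
    exact hmul
  -- the polynomial whose evaluations vanish on [0,∞)
  set P : Polynomial ℝ :=
    (∑ k ∈ Finset.range (m' + 1 + 1),
        Polynomial.C (b k * ((m' + 1).choose k : ℝ)) * Polynomial.X ^ k)
      - Polynomial.C c * Polynomial.X ^ (m' + 1) with hP
  have hProots : ∀ y : ℝ, 0 ≤ y → P.IsRoot y := by
    intro y hy
    simp only [hP, Polynomial.IsRoot, Polynomial.eval_sub, Polynomial.eval_finset_sum,
      Polynomial.eval_mul, Polynomial.eval_C, Polynomial.eval_pow, Polynomial.eval_X]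
    rw [sub_eq_zero]
    exact hyval y hy
  have hPzero : P = 0 := by
    apply Polynomial.eq_zero_of_infinite_isRoot
    apply Set.Infinite.mono (s := Set.Ici (0:ℝ))
    · exact fun y hy => hProots y hy
    · exact Set.Ici_infinite 0
  have hcoeff : ∀ r : ℕ, P.coeff r = 0 := by
    intro r; rw [hPzero]; simp
  have hco : ∀ r : ℕ, r ≤ m' + 1 →
      b r * ((m' + 1).choose r : ℝ) - (if r = m' + 1 then c else 0) = 0 := by
    intro r hr
    have := hcoeff r
    simp only [hP, Polynomial.coeff_sub, Polynomial.finset_sum_coeff,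
      Polynomial.coeff_C_mul, Polynomial.coeff_X_pow] at this
    rw [Finset.sum_eq_single r] at this
    · simpa using this
    · intro k hk hkr
      simp [Ne.symm hkr]
    · intro hk
      simp only [Finset.mem_range] at hk
      omega
  constructor
  · have := hco (m' + 1) le_rfl
    simp at this
    linarith
  · intro k hk
    have := hco k (by omega)
    have hne : k ≠ m' + 1 := by omega
    rw [if_neg hne] at this
    have hch : (0:ℝ) < ((m' + 1).choose k : ℝ) := by
      exact_mod_cast Nat.choose_pos (by omega : k ≤ m' + 1)
    have : b k * ((m' + 1).choose k : ℝ) = 0 := by linarith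
    exact (mul_eq_zero.mp this).resolve_right (ne_of_gt hch)
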